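/- Let Ω ⊆ ℂ be a nonempty closed set contained in the closed unit disc, which is a generalised Stolz domain with parameter α ≥ 1, i.e. there exist c, ε > 0 with 1 - |λ| ≥ c|λ - 1|^α for all λ ∈ Ω with |λ - 1| ≤ ε. Then there exists a constant c' > 0 such that dist(e^{iθ}, Ω) ≥ c'|θ|^α for all θ with 0 < |θ| ≤ π. -/

import Mathlib

open Real

lemma norm_exp_theta_sub_one_ge (θ : ℝ) (hθ : |θ| ≤ π) :
    2 / π * |θ| ≤ ‖Complex.exp (θ * Complex.I) - 1‖ := by
  have hπ : (0:ℝ) < π := Real.pi_pos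
  have h1 : Complex.exp (θ * Complex.I) - 1
      = Complex.ofReal (Real.cos θ - 1) + Complex.ofReal (Real.sin θ) * Complex.I := by
    rw [Complex.exp_mul_I, ← Complex.ofReal_cos, ← Complex.ofReal_sin]
    push_cast
    ring
  have hsq : ‖Complex.exp (θ * Complex.I) - 1‖ ^ 2 = 2 - 2 * Real.cos θ := by
    rw [h1, Complex.sq_norm, Complex.normSq_add_mul_I]
    have := Real.sin_sq_add_cos_sq θ
    nlinarith
  have hcos : Real.cos θ ≤ 1 - 2 / π ^ 2 * θ ^ 2 := Real.cos_le_one_sub_mul_cos_sq hθ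
  have hle : (2 / π * |θ|) ^ 2 ≤ ‖Complex.exp (θ * Complex.I) - 1‖ ^ 2 := by
    rw [hsq]
    have : (2 / π * |θ|) ^ 2 = 4 / π ^ 2 * θ ^ 2 := by
      rw [mul_pow, div_pow, sq_abs]; ring
    have h4 : 4 / π ^ 2 * θ ^ 2 = 2 * (2 / π ^ 2 * θ ^ 2) := by ring
    linarith
  have h0 : 0 ≤ 2 / π * |θ| := by positivity
  nlinarith [norm_nonneg (Complex.exp (θ * Complex.I) - 1)]

/-- If `Ω ⊆ 𝔻 ∪ {1}` is a nonempty closed subset of the closed unit disc which is a generalised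
Stolz domain with parameter `α ≥ 1`, then `dist(e^{iθ}, Ω) ≥ c'|θ|^α` for `0 < |θ| ≤ π`. -/
theorem stmt4 (Ω : Set ℂ) (hne : Ω.Nonempty) (hcl : IsClosed Ω)
    (hdisc : Ω ⊆ {z : ℂ | ‖z‖ ≤ 1})
    (hΩ : Ω ⊆ {z : ℂ | ‖z‖ < 1} ∪ {1})
    (α : ℝ) (hα : 1 ≤ α) (c : ℝ) (hc : 0 < c) (ε : ℝ) (hε : 0 < ε)
    (hstolz : ∀ z ∈ Ω, ‖z - 1‖ ≤ ε → c * ‖z - 1‖ ^ α ≤ 1 - ‖z‖) :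
    ∃ c' > (0:ℝ), ∀ θ : ℝ, 0 < |θ| → |θ| ≤ π →
      c' * |θ| ^ α ≤ Metric.infDist (Complex.exp (θ * Complex.I)) Ω := by
  have hπ : (0:ℝ) < π := Real.pi_pos
  -- compactness: points of Ω far from 1 are uniformly inside the disc
  set K : Set ℂ := Ω ∩ {z | ε ≤ ‖z - 1‖} with hKdef
  have hKclosed : IsClosed K :=
    hcl.inter (isClosed_le continuous_const ((continuous_id.sub continuous_const).norm))
  have hKcompact : IsCompact K := by
    refine (isCompact_closedBall (0:ℂ) 1).of_isClosed_subset hKclosed ?_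
    intro z hz
    simpa [Metric.mem_closedBall, dist_zero_right] using hdisc hz.1
  obtain ⟨δ, hδpos, hδ⟩ : ∃ δ > (0:ℝ), ∀ z ∈ K, δ ≤ 1 - ‖z‖ := by
    rcases K.eq_empty_or_nonempty with hK | hK
    · exact ⟨1, one_pos, fun z hz => by simp [hK] at hz⟩
    · obtain ⟨z₀, hz₀K, hmax⟩ := hKcompact.exists_isMaxOn hK
        (continuous_norm.continuousOn : ContinuousOn (fun z : ℂ => ‖z‖) K)
    
      have hz₀ne : z₀ ≠ 1 := by
        intro h
        have := hz₀K.2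
        simp [h] at this
        linarith
      have hz₀lt : ‖z₀‖ < 1 := by
        rcases hΩ hz₀K.1 with h | h
        · exact h
        · exact absurd h hz₀ne
      exact ⟨1 - ‖z₀‖, by linarith, fun z hz => by
        have := hmax hz
        simp only [Set.mem_setOf_eq] at this
        linarith [this]⟩
  refine ⟨min c (min 1 δ) / π ^ α, by positivity, ?_⟩
  intro θ hθ0 hθπ
  have hπα : (0:ℝ) < π ^ α := Real.rpow_pos_of_pos hπ α
  have hθα : (0:ℝ) < |θ| ^ α := Real.rpow_pos_of_pos hθ0 α
  have hdivrv : |θ| ^ α / π ^ α = (|θ| / π) ^ α := (Real.div_rpow (abs_nonneg θ) hπ.le α).symm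
  have hratio1 : |θ| / π ≤ 1 := by
    rw [div_le_one hπ]; exact hθπ
  have hratio0 : 0 < |θ| / π := by positivity
  have hexp1 : 2 / π * |θ| ≤ ‖Complex.exp (θ * Complex.I) - 1‖ :=
    norm_exp_theta_sub_one_ge θ hθπ
  have hnormexp : ‖Complex.exp (θ * Complex.I)‖ = 1 := by
    simp [Complex.norm_exp_ofReal_mul_I]
  set x := Complex.exp (θ * Complex.I)
  have key : ∀ z ∈ Ω, min c (min 1 δ) / π ^ α * |θ| ^ α ≤ dist x z := by
    intro z hz
    rw [dist_eq_norm]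
    have hb1 : 1 - ‖z‖ ≤ ‖x - z‖ := by
      have := norm_sub_norm_le x z
      rw [hnormexp] at this
      linarith
    have hb2 : ‖x - 1‖ - ‖z - 1‖ ≤ ‖x - z‖ := by
      have := norm_sub_norm_le (x - 1) (z - 1)
      rwa [sub_sub_sub_cancel_right] at this
    by_cases hzK : ε ≤ ‖z - 1‖
    · -- far from 1: uniform gap δ
      have hδz : δ ≤ 1 - ‖z‖ := hδ z ⟨hz, hzK⟩
      have h1 : min c (min 1 δ) / π ^ α * |θ| ^ α ≤ δ / π ^ α * π ^ α := by
        have hm : min c (min 1 δ) ≤ δ := le_trans (min_le_right _ _) (min_le_right _ _)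
        have hθπα : |θ| ^ α ≤ π ^ α := Real.rpow_le_rpow (abs_nonneg θ) hθπ (by linarith)
        have := mul_le_mul (div_le_div_of_nonneg_right hm hπα.le) hθπα hθα.le
          (by positivity : (0:ℝ) ≤ δ / π ^ α)
        exact this
      rw [div_mul_cancel₀ _ hπα.ne'] at h1
      linarith
    · push_neg at hzK
      have hst : c * ‖z - 1‖ ^ α ≤ 1 - ‖z‖ := hstolz z hz hzK.le
      by_cases hfar : |θ| / π ≤ ‖z - 1‖
      · -- z not too close to 1 relative to θ: use Stolz
        have h1 : min c (min 1 δ) / π ^ α * |θ| ^ α ≤ c * ‖z - 1‖ ^ α := by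
          have hm : min c (min 1 δ) ≤ c := min_le_left _ _
          calc min c (min 1 δ) / π ^ α * |θ| ^ α
              ≤ c / π ^ α * |θ| ^ α := by
                exact mul_le_mul_of_nonneg_right (div_le_div_of_nonneg_right hm hπα.le) hθα.le
            _ = c * (|θ| / π) ^ α := by rw [← hdivrv]; ring
            _ ≤ c * ‖z - 1‖ ^ α := by
                exact mul_le_mul_of_nonneg_left
                  (Real.rpow_le_rpow hratio0.le hfar (by linarith)) hc.le
        linarith
      · -- z very close to 1: e^{iθ} stays far from z
        push_neg at hfar
        have h2 : |θ| / π ≤ ‖x - z‖ := by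
          have : 2 / π * |θ| - ‖z - 1‖ ≤ ‖x - z‖ := by linarith
          have h3 : 2 / π * |θ| = 2 * (|θ| / π) := by ring
          rw [h3] at this
          linarith
        have h4 : (|θ| / π) ^ α ≤ |θ| / π := by
          calc (|θ| / π) ^ α ≤ (|θ| / π) ^ (1:ℝ) :=
                Real.rpow_le_rpow_of_exponent_ge hratio0 hratio1 hα
            _ = |θ| / π := Real.rpow_one _
        have hm1 : min c (min 1 δ) ≤ 1 := le_trans (min_le_right _ _) (min_le_left _ _)
        calc min c (min 1 δ) / π ^ α * |θ| ^ α
            ≤ 1 / π ^ α * |θ| ^ α := by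
              exact mul_le_mul_of_nonneg_right (div_le_div_of_nonneg_right hm1 hπα.le) hθα.le
          _ = (|θ| / π) ^ α := by rw [← hdivrv]; ring
          _ ≤ |θ| / π := h4
          _ ≤ ‖x - z‖ := h2
  -- conclude infDist bound
  by_contra hcon
  push_neg at hcon
  obtain ⟨z, hzΩ, hzlt⟩ := (Metric.infDist_lt_iff hne).mp hcon
  exact absurd (key z hzΩ) (not_le.mpr hzlt)
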